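/- Applying the Reverse Rejecting (RR) rule to the preferential categories C_p only, and then allocating the q_{c_u} unreserved units among the agents left unmatched by the RR rule in order of the baseline ordering ≻_π from highest priority, yields a maximum beneficiary assignment: the resulting matching maximizes the number of agents matched to preferential categories among all matchings complying with the eligibility requirements. -/

import Mathlib

open scoped Classical

/-- An instance of the rationing problem: a quota for every category and, for every
category `c`, a priority ranking `≿_c`: a total preorder on `N ∪ {∅}`, where we model
`N ∪ {∅}` as `Option N` with `none` playing the role of `∅`. -/
structure Inst (N C : Type*) where
  quota : C → ℕ
  prio : C → Option N → Option N → Prop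
  total : ∀ c x y, prio c x y ∨ prio c y x
  trans : ∀ c x y z, prio c x y → prio c y z → prio c x z

namespace Inst

variable {N C : Type*}

/-- The strict part `≻_c` of the priority ranking `≿_c`. -/
def Strict (I : Inst N C) (c : C) (x y : Option N) : Prop :=
  I.prio c x y ∧ ¬ I.prio c y x

/-- Agent `i` is eligible for category `c` if `i ≻_c ∅`. -/
def Eligible (I : Inst N C) (i : N) (c : C) : Prop :=
  I.Strict c (some i) none

end Inst

variable {N C : Type*} [Fintype N] [DecidableEq N] [DecidableEq C]

/-- The number of matched agents of (the function) `μ`. -/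
def msize (μ : N → Option C) : ℕ :=
  (Finset.univ.filter fun i => μ i ≠ none).card

/-- `μ` satisfies the capacity constraints: every category `c` is matched
to at most `quota c` agents. -/
def Inst.IsMatching (I : Inst N C) (μ : N → Option C) : Prop :=
  ∀ c, (Finset.univ.filter fun i => μ i = some c).card ≤ I.quota c

/-- A baseline ordering `≻_π`, given as a duplicate-free list of all agents,
listed from highest priority to lowest priority; so `i ≻_π j` iff
`order.idxOf i < order.idxOf j`. -/
def IsBaseline (order : List N) : Prop :=
  order.Nodup ∧ ∀ i : N, i ∈ order

/-- `μ` complies with the eligibility requirements. -/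
def Complies (I : Inst N C) (μ : N → Option C) : Prop :=
  ∀ (i : N) (c : C), μ i = some c → I.Eligible i c

/-- The number of agents matched to a preferential category (a category other than the
unreserved category `cu`). -/
def beneCount (cu : C) (μ : N → Option C) : ℕ :=
  (Finset.univ.filter fun i => μ i ≠ none ∧ μ i ≠ some cu).card

/-- `μ` is a matching of the reduced reservation graph of the instance restricted to the
preferential categories `C_p = C \ {cu}`, with rejected set `R`: it satisfies the capacity
constraints, matches agents only to preferential categories they are eligible for, leaves
the agents of `R` unmatched, and uses no edge `{i,c}` with `j ≻_c i` for some `j ∈ R`. -/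
def PMatch1 (I : Inst N C) (cu : C) (R : Finset N) (μ : N → Option C) : Prop :=
  I.IsMatching μ ∧ (∀ i ∈ R, μ i = none) ∧
    ∀ (i : N) (c : C), μ i = some c →
      c ≠ cu ∧ I.Eligible i c ∧ ∀ j ∈ R, ¬ I.Strict c (some j) (some i)

/-- The size of a maximum size matching of the reduced reservation graph restricted to the
preferential categories. -/
noncomputable def ms1 (I : Inst N C) (cu : C) (R : Finset N) : ℕ :=
  sSup {k | ∃ μ : N → Option C, PMatch1 I cu R μ ∧ msize μ = k}

/-- The rejected set of the RR rule applied to the preferential categories only, processing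
the agents in order of the baseline ordering from lowest to highest priority. -/
noncomputable def rrRej1 (I : Inst N C) (cu : C) (order : List N) : Finset N :=
  order.foldr
    (fun i R => if ms1 I cu (insert i R) = ms1 I cu (∅ : Finset N) then insert i R else R) ∅

/-- Allocating the `q_{c_u}` unreserved units among the agents left unmatched by `μP` in
order of the baseline ordering from highest priority. -/
noncomputable def fillUnreserved (I : Inst N C) (cu : C) (order : List N)
    (μP : N → Option C) : N → Option C := fun i =>
  match μP i with
  | some c => some c
  | none =>
    if (Finset.univ.filter fun j => μP j = none ∧ order.idxOf j < order.idxOf i).card <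
        I.quota cu then
      some cu
    else none


lemma msize_le_card (μ : N → Option C) : msize μ ≤ Fintype.card N :=
  (Finset.card_filter_le _ _).trans (le_of_eq Finset.card_univ)

lemma ms1_bdd (I : Inst N C) (cu : C) (R : Finset N) :
    BddAbove {k | ∃ μ : N → Option C, PMatch1 I cu R μ ∧ msize μ = k} := by
  refine ⟨Fintype.card N, ?_⟩
  rintro k ⟨μ, -, rfl⟩
  exact msize_le_card μ

lemma le_ms1 (I : Inst N C) (cu : C) {R : Finset N} {μ : N → Option C}
    (h : PMatch1 I cu R μ) : msize μ ≤ ms1 I cu R :=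
  le_csSup (ms1_bdd I cu R) ⟨μ, h, rfl⟩

lemma ms1_rrRej1 (I : Inst N C) (cu : C) (order : List N) :
    ms1 I cu (rrRej1 I cu order) = ms1 I cu ∅ := by
  unfold rrRej1
  induction order with
  | nil => rfl
  | cons i l ih =>
    simp only [List.foldr_cons]
    split_ifs with h
    · exact h
    · exact ih

/-- Applying the RR rule to the preferential categories only, and then
allocating the unreserved units among the unmatched agents in order of the baseline ordering
from highest priority, yields a maximum beneficiary assignment: the resulting matching is a
matching complying with the eligibility requirements that maximizes the number of agents
matched to preferential categories among all such matchings. -/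
theorem rr_then_unreserved_max_beneficiary (I : Inst N C) (cu : C) (order : List N)
    (hb : IsBaseline order) (hcuE : ∀ i : N, I.Eligible i cu)
    (hcuP : ∀ i j : N, I.Strict cu (some i) (some j) ↔ order.idxOf i < order.idxOf j)
    (μP : N → Option C)
    (hμP : PMatch1 I cu (rrRej1 I cu order) μP ∧ msize μP = ms1 I cu (rrRej1 I cu order)) :
    I.IsMatching (fillUnreserved I cu order μP) ∧
      Complies I (fillUnreserved I cu order μP) ∧
      ∀ ν : N → Option C, I.IsMatching ν → Complies I ν →
        beneCount cu ν ≤ beneCount cu (fillUnreserved I cu order μP) := by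
  obtain ⟨hPM, hsz⟩ := hμP
  obtain ⟨hcap, hRnone, hedge⟩ := hPM
  set R := rrRej1 I cu order with hR
  set μ := fillUnreserved I cu order μP with hμ
  -- Every μP-matched agent is matched to a non-cu category it is eligible for.
  -- fill facts
  have hfill_some : ∀ i c, μP i = some c → μ i = some c := by
    intro i c h
    simp [hμ, fillUnreserved, h]
  have hfill_none : ∀ i, μP i = none → μ i = some cu ∨ μ i = none := by
    intro i h
    by_cases hlt : (Finset.univ.filter fun j => μP j = none ∧
        order.idxOf j < order.idxOf i).card < I.quota cu
    · left; simp [hμ, fillUnreserved, h, hlt]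
    · right; simp [hμ, fillUnreserved, h, hlt]
  -- capacity at cu
  have hcnt_mono : ∀ i i' : N, μP i = none → order.idxOf i < order.idxOf i' →
      (Finset.univ.filter fun j => μP j = none ∧ order.idxOf j < order.idxOf i).card <
      (Finset.univ.filter fun j => μP j = none ∧ order.idxOf j < order.idxOf i').card := by
    intro i i' hnone hlt
    apply Finset.card_lt_card
    rw [Finset.ssubset_iff_of_subset]
    · exact ⟨i, Finset.mem_filter.mpr ⟨Finset.mem_univ i, hnone, hlt⟩, by
        simp only [Finset.mem_filter]
        rintro ⟨-, -, hh⟩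
        exact lt_irrefl _ hh⟩
    · intro j hj
      simp only [Finset.mem_filter] at hj ⊢
      exact ⟨hj.1, hj.2.1, hj.2.2.trans hlt⟩
  have hcap_cu : (Finset.univ.filter fun i => μ i = some cu).card ≤ I.quota cu := by
    have := Finset.card_le_card_of_injOn
      (f := fun i => (Finset.univ.filter fun j => μP j = none ∧
        order.idxOf j < order.idxOf i).card)
      (s := Finset.univ.filter fun i => μ i = some cu)
      (t := Finset.range (I.quota cu)) ?_ ?_
    · simpa using this
    · intro i hi
      simp only [Finset.mem_coe, Finset.mem_filter] at hi
      rcases h : μP i with _ | c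
      · by_cases hlt : (Finset.univ.filter fun j => μP j = none ∧
            order.idxOf j < order.idxOf i).card < I.quota cu
        · simpa using hlt
        · have hnn : μ i = none := by simp [hμ, fillUnreserved, h, hlt]
          rw [hi.2] at hnn
          exact absurd hnn (by simp)
      · have := hfill_some i c h
        rw [hi.2] at this
        have hc : c = cu := by simpa using this.symm
        exact absurd (hedge i c h).1 (by simp [hc])
    · intro i hi i' hi' heq
      simp only [Finset.coe_filter, Set.mem_setOf_eq] at hi hi'
      have hnone : ∀ k : N, μ k = some cu → μP k = none := by
        intro k hk
        rcases h : μP k with _ | c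
        · rfl
        · have := hfill_some k c h
          rw [hk] at this
          have hc : c = cu := by simpa using this.symm
          exact absurd (hedge k c h).1 (by simp [hc])
      by_contra hne
      have hidx : order.idxOf i ≠ order.idxOf i' := fun h =>
        hne ((List.idxOf_inj (hb.2 i)).mp h)
      rcases lt_or_gt_of_ne hidx with hlt | hlt
      · exact absurd heq (ne_of_lt (hcnt_mono i i' (hnone i hi.2) hlt))
      · exact absurd heq.symm (ne_of_lt (hcnt_mono i' i (hnone i' hi'.2) hlt))
  -- μ is a matching
  have hmatch : I.IsMatching μ := by
    intro c
    by_cases hc : c = cu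
    · subst hc; exact hcap_cu
    · have hset : (Finset.univ.filter fun i => μ i = some c) =
          (Finset.univ.filter fun i => μP i = some c) := by
        ext i
        simp only [Finset.mem_filter, Finset.mem_univ, true_and]
        constructor
        · intro h
          rcases hh : μP i with _ | c'
          · rcases hfill_none i hh with h' | h' <;> rw [h'] at h
            · exact absurd (Option.some_inj.mp h).symm hc
            · exact absurd h (by simp)
          · have := hfill_some i c' hh
            rw [h] at this
            exact this.symm
        · intro h
          exact hfill_some i c h
      rw [hset]
      exact hcap c
  -- μ complies
  have hcomp : Complies I μ := by
    intro i c h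
    rcases hh : μP i with _ | c'
    · rcases hfill_none i hh with h' | h' <;> rw [h'] at h
      · rw [(Option.some_inj.mp h).symm]; exact hcuE i
      · exact absurd h (by simp)
    · have := hfill_some i c' hh
      rw [h] at this
      have hce : c = c' := Option.some_inj.mp this
      rw [hce]
      exact (hedge i c' hh).2.1
  refine ⟨hmatch, hcomp, ?_⟩
  -- beneCount μ = msize μP
  have hbene : beneCount cu μ = msize μP := by
    unfold beneCount msize
    congr 1
    ext i
    simp only [Finset.mem_filter, Finset.mem_univ, true_and]
    rcases hh : μP i with _ | c'
    · rcases hfill_none i hh with h' | h' <;> simp [h', hh]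
    · have := hfill_some i c' hh
      have hne := (hedge i c' hh).1
      simp [this, hne, hh]
  intro ν hνM hνC
  -- restrict ν to preferential categories
  set ν' : N → Option C := fun i => if ν i = some cu then none else ν i with hν'
  have hν'some : ∀ i c, ν' i = some c → ν i = some c ∧ c ≠ cu := by
    intro i c h
    simp only [hν'] at h
    split_ifs at h with hh
    exact ⟨h, fun hc => hh (hc ▸ h)⟩
  have hPM' : PMatch1 I cu ∅ ν' := by
    refine ⟨fun c => ?_, by simp, fun i c h => ?_⟩
    · refine le_trans (Finset.card_le_card ?_) (hνM c)
      intro i hi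
      simp only [Finset.mem_filter, Finset.mem_univ, true_and] at hi ⊢
      exact (hν'some i c hi).1
    · obtain ⟨h1, h2⟩ := hν'some i c h
      exact ⟨h2, hνC i c h1, by simp⟩
  have hbeneν : beneCount cu ν = msize ν' := by
    unfold beneCount msize
    congr 1
    ext i
    simp only [Finset.mem_filter, Finset.mem_univ, true_and, hν']
    by_cases hcu : ν i = some cu <;> simp [hcu]
  calc beneCount cu ν = msize ν' := hbeneν
    _ ≤ ms1 I cu ∅ := le_ms1 I cu hPM'
    _ = ms1 I cu R := (ms1_rrRej1 I cu order).symm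
    _ = msize μP := hsz.symm
    _ = beneCount cu μ := hbene.symm
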